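/- Every shortest path P between u = (u₁,u₂) and v = (v₁,v₂) in the Cartesian product of two compatible signed graphs has sign equal to the product of the (unique) sign of shortest u₁–v₁ paths in Σ₁ and the (unique) sign of shortest u₂–v₂ paths in Σ₂. -/

import Mathlib

open SimpleGraph

/-- The sign of a walk: the product of the signs of its edges. -/
def walkSign {V : Type*} {G : SimpleGraph V} (σ : V → V → ℤ) :
    {u v : V} → G.Walk u v → ℤ
  | _, _, SimpleGraph.Walk.nil => 1
  | _, _, @SimpleGraph.Walk.cons _ _ a b _ _ p => σ a b * walkSign σ p

/-- A walk is a shortest path if its length equals the distance of its endpoints. -/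
def IsShortest {V : Type*} {G : SimpleGraph V} {u v : V} (p : G.Walk u v) : Prop :=
  p.length = G.dist u v

/-- A signed graph is compatible if all shortest paths between any two vertices have
the same sign. -/
def Compatible {V : Type*} (G : SimpleGraph V) (σ : V → V → ℤ) : Prop :=
  ∀ (u v : V) (p q : G.Walk u v), IsShortest p → IsShortest q →
    walkSign σ p = walkSign σ q

/-- The signature of the Cartesian product of signed graphs: an edge inherits the sign
from the coordinate in which the move occurs. -/
def boxSign {V₁ V₂ : Type*} (σ₁ : V₁ → V₁ → ℤ) (σ₂ : V₂ → V₂ → ℤ)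
    [DecidableEq V₁] [DecidableEq V₂] : V₁ × V₂ → V₁ × V₂ → ℤ :=
  fun x y => if x.2 = y.2 then σ₁ x.1 y.1 else σ₂ x.2 y.2

section Aux

variable {V₁ V₂ : Type*} [DecidableEq V₁] [DecidableEq V₂]
  {G₁ : SimpleGraph V₁} {G₂ : SimpleGraph V₂}

lemma adj_dist_le {V : Type*} {G : SimpleGraph V} (hconn : G.Connected) {a b c : V}
    (h : G.Adj a b) : G.dist a c ≤ 1 + G.dist b c := by
  have h1 : G.dist a b ≤ 1 := by
    have := SimpleGraph.dist_le (SimpleGraph.Walk.cons h SimpleGraph.Walk.nil)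
    simpa using this
  have := hconn.dist_triangle (u := a) (v := b) (w := c)
  omega

lemma walkSign_append {V : Type*} {G : SimpleGraph V} (σ : V → V → ℤ) {u v w : V}
    (p : G.Walk u v) (q : G.Walk v w) :
    walkSign σ (p.append q) = walkSign σ p * walkSign σ q := by
  induction p with
  | nil => simp [walkSign]
  | cons h p ih => simp [walkSign, ih, mul_assoc]

lemma walkSign_boxProdLeft (σ₁ : V₁ → V₁ → ℤ) (σ₂ : V₂ → V₂ → ℤ) {a₁ a₂ : V₁} (b : V₂)
    (w : G₁.Walk a₁ a₂) :
    walkSign (boxSign σ₁ σ₂) (w.boxProdLeft G₂ b) = walkSign σ₁ w := by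
  induction w with
  | nil => rfl
  | cons h p ih =>
    simp only [SimpleGraph.Walk.boxProdLeft, SimpleGraph.Walk.map_cons] at *
    simp [walkSign, boxSign, ih]
    exact Or.inl ih

lemma walkSign_boxProdRight (σ₁ : V₁ → V₁ → ℤ) (σ₂ : V₂ → V₂ → ℤ) {b₁ b₂ : V₂} (a : V₁)
    (w : G₂.Walk b₁ b₂) :
    walkSign (boxSign σ₁ σ₂) (w.boxProdRight G₁ a) = walkSign σ₂ w := by
  induction w with
  | nil => rfl
  | cons h p ih =>
    simp only [SimpleGraph.Walk.boxProdRight, SimpleGraph.Walk.map_cons] at *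
    simp [walkSign, boxSign, h.ne, ih]
    exact Or.inl ih

lemma sum_dist_le_length (h₁ : G₁.Connected) (h₂ : G₂.Connected) :
    ∀ {x y : V₁ × V₂} (P : (G₁ □ G₂).Walk x y),
      G₁.dist x.1 y.1 + G₂.dist x.2 y.2 ≤ P.length := by
  intro x y P
  induction P with
  | nil => simp
  | @cons a z c h Q ih =>
    rcases h with ⟨h, he⟩ | ⟨h, he⟩
    · have := adj_dist_le h₁ (c := c.1) h
      show _ ≤ Q.length + 1
      rw [he]
      omega
    · have := adj_dist_le h₂ (c := c.2) h
      show _ ≤ Q.length + 1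
      rw [he]
      omega

lemma boxProd_dist (h₁ : G₁.Connected) (h₂ : G₂.Connected) (x y : V₁ × V₂) :
    (G₁ □ G₂).dist x y = G₁.dist x.1 y.1 + G₂.dist x.2 y.2 := by
  apply le_antisymm
  · obtain ⟨p, hp⟩ := h₁.exists_walk_length_eq_dist x.1 y.1
    obtain ⟨q, hq⟩ := h₂.exists_walk_length_eq_dist x.2 y.2
    have hP := SimpleGraph.dist_le
      (((p.boxProdLeft G₂ x.2).append (q.boxProdRight G₁ y.1)) :
        (G₁ □ G₂).Walk (x.1, x.2) (y.1, y.2))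
    simp only [SimpleGraph.Walk.length_append, SimpleGraph.Walk.boxProdLeft,
      SimpleGraph.Walk.boxProdRight, SimpleGraph.Walk.length_map] at hP
    have e1 : ((p.boxProdLeft G₂ x.2).append (q.boxProdRight G₁ y.1)).length =
        G₁.dist x.1 y.1 + G₂.dist x.2 y.2 := by
      have l1 : (p.boxProdLeft G₂ x.2).length = p.length := SimpleGraph.Walk.length_map _ _
      have l2 : (q.boxProdRight G₁ y.1).length = q.length := SimpleGraph.Walk.length_map _ _
      rw [SimpleGraph.Walk.length_append, l1, l2, hp, hq]
    exact le_of_le_of_eq hP e1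
  · obtain ⟨P, hP⟩ := ((h₁.boxProd h₂).exists_walk_length_eq_dist x y)
    rw [← hP]
    exact sum_dist_le_length h₁ h₂ P

end Aux

/-- Every shortest path between `(u₁,u₂)` and `(v₁,v₂)` in the Cartesian product of
two compatible signed graphs has sign equal to the product of the unique sign of
shortest `u₁`–`v₁` paths in `Σ₁` and the unique sign of shortest `u₂`–`v₂` paths
in `Σ₂`. -/
theorem boxProd_shortest_walk_sign {V₁ V₂ : Type*} [DecidableEq V₁] [DecidableEq V₂]
    (G₁ : SimpleGraph V₁) (G₂ : SimpleGraph V₂)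
    (h₁ : G₁.Connected) (h₂ : G₂.Connected)
    (σ₁ : V₁ → V₁ → ℤ) (σ₂ : V₂ → V₂ → ℤ)
    (hσ₁ : ∀ u v : V₁, G₁.Adj u v → σ₁ u v = 1 ∨ σ₁ u v = -1)
    (hσ₂ : ∀ u v : V₂, G₂.Adj u v → σ₂ u v = 1 ∨ σ₂ u v = -1)
    (hsymm₁ : ∀ u v : V₁, σ₁ u v = σ₁ v u) (hsymm₂ : ∀ u v : V₂, σ₂ u v = σ₂ v u)
    (hc₁ : Compatible G₁ σ₁) (hc₂ : Compatible G₂ σ₂)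
    (u₁ v₁ : V₁) (u₂ v₂ : V₂) (s t : ℤ)
    (hs : ∀ p : G₁.Walk u₁ v₁, IsShortest p → walkSign σ₁ p = s)
    (ht : ∀ q : G₂.Walk u₂ v₂, IsShortest q → walkSign σ₂ q = t) :
    ∀ P : (G₁ □ G₂).Walk (u₁, u₂) (v₁, v₂), IsShortest P →
      walkSign (boxSign σ₁ σ₂) P = s * t := by
  have key : ∀ (x y : V₁ × V₂) (P : (G₁ □ G₂).Walk x y), IsShortest P →
      ∀ s' t', (∀ p : G₁.Walk x.1 y.1, IsShortest p → walkSign σ₁ p = s') →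
               (∀ q : G₂.Walk x.2 y.2, IsShortest q → walkSign σ₂ q = t') →
      walkSign (boxSign σ₁ σ₂) P = s' * t' := by
    intro x y P
    induction P with
    | nil =>
      intro _ s' t' hs' ht'
      have hns := hs' SimpleGraph.Walk.nil (by simp [IsShortest, SimpleGraph.dist_self])
      have hnt := ht' SimpleGraph.Walk.nil (by simp [IsShortest, SimpleGraph.dist_self])
      simp only [walkSign] at hns hnt ⊢
      rw [← hns, ← hnt]; ring
    | @cons a z c h Q ih =>
      obtain ⟨a1, a2⟩ := a
      obtain ⟨z1, z2⟩ := z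
      obtain ⟨c1, c2⟩ := c
      intro hP s' t' hs' ht'
      simp only at hs' ht' ih
      have hlen : Q.length + 1 = (G₁ □ G₂).dist (a1, a2) (c1, c2) := by
        have := hP
        simp only [IsShortest, SimpleGraph.Walk.length_cons] at this
        omega
      have hda : (G₁ □ G₂).dist (a1, a2) (c1, c2) = G₁.dist a1 c1 + G₂.dist a2 c2 :=
        boxProd_dist h₁ h₂ _ _
      have hQge : G₁.dist z1 c1 + G₂.dist z2 c2 ≤ Q.length :=
        sum_dist_le_length h₁ h₂ Q
      obtain ⟨p₀, hp₀⟩ := h₁.exists_walk_length_eq_dist z1 c1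
      obtain ⟨q₀, hq₀⟩ := h₂.exists_walk_length_eq_dist z2 c2
      have hp₀s : IsShortest p₀ := hp₀
      have hq₀s : IsShortest q₀ := hq₀
      have h' := h
      rcases h' with ⟨hadj, he⟩ | ⟨hadj, he⟩ <;> simp only at hadj he
      · -- move in first coordinate, a2 = z2
        subst he
        have hd1 : G₁.dist a1 c1 ≤ 1 + G₁.dist z1 c1 := adj_dist_le h₁ hadj
        have hQs : Q.length = G₁.dist z1 c1 + G₂.dist a2 c2 := by omega
        have hdd : G₁.dist a1 c1 = 1 + G₁.dist z1 c1 := by omega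
        have hQshort : IsShortest Q := by
          rw [IsShortest, boxProd_dist h₁ h₂]; exact hQs
        have hIH := ih hQshort (walkSign σ₁ p₀) (walkSign σ₂ q₀)
          (fun p hp => hc₁ _ _ p p₀ hp hp₀s)
          (fun q hq => hc₂ _ _ q q₀ hq hq₀s)
        have hcons : IsShortest (SimpleGraph.Walk.cons hadj p₀) := by
          rw [IsShortest, SimpleGraph.Walk.length_cons, hp₀, hdd]; omega
        have hs'' : σ₁ a1 z1 * walkSign σ₁ p₀ = s' := hs' _ hcons
        have ht'' : walkSign σ₂ q₀ = t' := ht' q₀ hq₀s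
        show boxSign σ₁ σ₂ (a1, a2) (z1, a2) * walkSign (boxSign σ₁ σ₂) Q = s' * t'
        rw [hIH, boxSign]
        rw [if_pos rfl]
        rw [← hs'', ← ht'']
        ring
      · -- move in second coordinate, a1 = z1
        subst he
        have hd2 : G₂.dist a2 c2 ≤ 1 + G₂.dist z2 c2 := adj_dist_le h₂ hadj
        have hQs : Q.length = G₁.dist a1 c1 + G₂.dist z2 c2 := by omega
        have hdd : G₂.dist a2 c2 = 1 + G₂.dist z2 c2 := by omega
        have hQshort : IsShortest Q := by
          rw [IsShortest, boxProd_dist h₁ h₂]; exact hQs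
        have hIH := ih hQshort (walkSign σ₁ p₀) (walkSign σ₂ q₀)
          (fun p hp => hc₁ _ _ p p₀ hp hp₀s)
          (fun q hq => hc₂ _ _ q q₀ hq hq₀s)
        have hcons : IsShortest (SimpleGraph.Walk.cons hadj q₀) := by
          rw [IsShortest, SimpleGraph.Walk.length_cons, hq₀, hdd]; omega
        have ht'' : σ₂ a2 z2 * walkSign σ₂ q₀ = t' := ht' _ hcons
        have hs'' : walkSign σ₁ p₀ = s' := hs' p₀ hp₀s
        show boxSign σ₁ σ₂ (a1, a2) (a1, z2) * walkSign (boxSign σ₁ σ₂) Q = s' * t'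
        rw [hIH, boxSign]
        simp only [if_neg hadj.ne]
        rw [← hs'', ← ht'']
        ring
  intro P hP
  exact key _ _ P hP s t hs ht
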